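/- Let C be a cartesian closed category with terminal object 1 and a fixed object S admitting a global element s₀ : 1 ⟶ S, and let T be the state monad T X = (S × X)^S. Let (X, h) be a T-algebra, f_X = h ∘ (q_{S×X})^* : S × X ⟶ X, and suppose f_X = m ∘ e with e : S × X ⟶ Y an epimorphism and m : Y ⟶ X a monomorphism. Then the transpose e^* : X ⟶ Y^S has a section. -/

import Mathlib

open CategoryTheory CategoryTheory.MonoidalCategory CategoryTheory.Limits
  CategoryTheory.CartesianMonoidalCategory CategoryTheory.CartesianClosed

/-- In a cartesian closed category `C` with terminal object `1` and an object
`S` with a global element `s₀ : 1 ⟶ S`, for a `T`-algebra `(X, h)` of the state monad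
`T X = (S × X)^S`, if `f_X = h ∘ (q_{S×X})^*` factors as an epi `e : S × X ⟶ Y` followed by a
mono `m : Y ⟶ X`, then the transpose `e^* : X ⟶ Y^S` has a section. -/
theorem stmt11 {C : Type u} [Category.{v} C] [CartesianMonoidalCategory C] [MonoidalClosed C]
    (S : C) (s₀ : 𝟙_ C ⟶ S)
    (A : ((ihom.adjunction S).toMonad).Algebra)
    (Y : C) (e : S ⊗ A.A ⟶ Y) (m : Y ⟶ A.A)
    (hfac : MonoidalClosed.curry (snd S (S ⊗ A.A)) ≫ A.a = e ≫ m)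
    (he : Epi e) (hm : Mono m) :
    ∃ σ : (S ⟹ Y) ⟶ A.A, σ ≫ MonoidalClosed.curry e = 𝟙 (S ⟹ Y) := by
  set f : S ⊗ A.A ⟶ A.A := MonoidalClosed.curry (snd S (S ⊗ A.A)) ≫ A.a with hf
  -- how μ acts on curried maps
  have hμ : ∀ {W Z : C} (g : S ⊗ W ⟶ S ⊗ (S ⟹ (S ⊗ Z))),
      MonoidalClosed.curry g ≫ ((ihom.adjunction S).toMonad).μ.app Z
        = MonoidalClosed.curry (g ≫ (ihom.ev S).app (S ⊗ Z)) := by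
    intro W Z g
    show MonoidalClosed.curry g ≫ (ihom S).map ((ihom.adjunction S).counit.app (S ⊗ Z)) = _
    rw [← MonoidalClosed.curry_natural_right]
    rfl
  have hev : ∀ {W Z : C} (g : S ⊗ W ⟶ Z),
      (S ◁ MonoidalClosed.curry g) ≫ (ihom.ev S).app Z = g := by
    intro W Z g
    rw [← MonoidalClosed.uncurry_eq, MonoidalClosed.uncurry_curry]
  -- the key computation, from the algebra laws
  have main : ∀ {W : C} (w : S ⊗ W ⟶ S ⊗ A.A),
      (S ◁ (MonoidalClosed.curry w ≫ A.a)) ≫ f = w ≫ f := by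
    intro W w
    have h1 : (S ◁ A.a) ≫ MonoidalClosed.curry (snd S (S ⊗ A.A))
        = MonoidalClosed.curry (snd S (S ⊗ ((ihom.adjunction S).toMonad).obj A.A))
            ≫ ((ihom.adjunction S).toMonad : C ⥤ C).map A.a := by
      rw [← MonoidalClosed.curry_natural_left, whiskerLeft_snd]
      show _ = MonoidalClosed.curry _ ≫ (ihom S).map (S ◁ A.a)
      rw [← MonoidalClosed.curry_natural_right]
    have h2 : (S ◁ MonoidalClosed.curry w)
          ≫ MonoidalClosed.curry (snd S (S ⊗ ((ihom.adjunction S).toMonad).obj A.A))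
        = MonoidalClosed.curry (snd S (S ⊗ W) ≫ (S ◁ MonoidalClosed.curry w)) := by
      erw [← MonoidalClosed.curry_natural_left, whiskerLeft_snd]; rfl
    calc (S ◁ (MonoidalClosed.curry w ≫ A.a)) ≫ f
        = (S ◁ MonoidalClosed.curry w) ≫ (S ◁ A.a)
            ≫ MonoidalClosed.curry (snd S (S ⊗ A.A)) ≫ A.a := by
          erw [hf, MonoidalCategory.whiskerLeft_comp, Category.assoc]
      _ = (S ◁ MonoidalClosed.curry w)
            ≫ MonoidalClosed.curry (snd S (S ⊗ ((ihom.adjunction S).toMonad).obj A.A))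
            ≫ ((ihom.adjunction S).toMonad : C ⥤ C).map A.a ≫ A.a := by
          erw [reassoc_of% h1]; exact (S ◁ MonoidalClosed.curry w) ≫= Category.assoc _ _ _
      _ = (S ◁ MonoidalClosed.curry w)
            ≫ MonoidalClosed.curry (snd S (S ⊗ ((ihom.adjunction S).toMonad).obj A.A))
            ≫ ((ihom.adjunction S).toMonad).μ.app A.A ≫ A.a := by
          erw [A.assoc]; rfl
      _ = MonoidalClosed.curry (snd S (S ⊗ W) ≫ (S ◁ MonoidalClosed.curry w))
            ≫ ((ihom.adjunction S).toMonad).μ.app A.A ≫ A.a := by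
          rw [reassoc_of% h2]; rfl
      _ = MonoidalClosed.curry (snd S (S ⊗ W) ≫ w) ≫ A.a := by
          erw [← Category.assoc, hμ]; rw [Category.assoc, hev]; rfl
      _ = w ≫ f := by
          erw [hf, ← Category.assoc, ← MonoidalClosed.curry_natural_left, whiskerLeft_snd]
  -- f restricts to the identity on the image of m
  haveI : (tensorLeft S).IsLeftAdjoint := ⟨_, ⟨ihom.adjunction S⟩⟩
  haveI hSe : Epi (S ◁ e) := inferInstanceAs (Epi ((tensorLeft S).map e))
  have hM : (S ◁ m) ≫ f = snd S Y ≫ m := by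
    rw [← cancel_epi (S ◁ e), whiskerLeft_snd_assoc, ← MonoidalCategory.whiskerLeft_comp_assoc,
      ← hfac]
    rw [main (snd S (S ⊗ A.A))]
  -- the section
  refine ⟨MonoidalClosed.curry
      (lift (fst S (S ⟹ Y)) ((ihom.ev S).app Y ≫ m)) ≫ A.a, ?_⟩
  apply MonoidalClosed.uncurry_injective
  rw [MonoidalClosed.uncurry_natural_left, MonoidalClosed.uncurry_curry,
    MonoidalClosed.uncurry_id_eq_ev]
  rw [← cancel_mono m, Category.assoc, ← hfac, main]
  have hw : lift (fst S (S ⟹ Y)) ((ihom.ev S).app Y ≫ m)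
      = lift (fst S (S ⟹ Y)) ((ihom.ev S).app Y) ≫ (S ◁ m) := by
    apply CartesianMonoidalCategory.hom_ext <;> simp
  rw [hw, Category.assoc, hM]
  simp
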